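/- Let P = ({θ_i}_{i=0}^d; {θ*_i}_{i=0}^d; {φ_i}_{i=1}^d; {ϕ_i}_{i=1}^d) be a parameter array of diameter d over a field K. Then each of the following seven sequences is also a parameter array of diameter d over K: ({θ_i}; {θ*_{d−i}}; {ϕ_{d−i+1}}; {φ_{d−i+1}}); ({θ_{d−i}}; {θ*_i}; {ϕ_i}; {φ_i}); ({θ_{d−i}}; {θ*_{d−i}}; {φ_{d−i+1}}; {ϕ_{d−i+1}}); ({θ*_i}; {θ_i}; {φ_i}; {ϕ_{d−i+1}}); ({θ*_{d−i}}; {θ_i}; {ϕ_{d−i+1}}; {φ_i}); ({θ*_i}; {θ_{d−i}}; {ϕ_i}; {φ_{d−i+1}}); ({θ*_{d−i}}; {θ_{d−i}}; {φ_{d−i+1}}; {ϕ_i}). (These are the parameter arrays of the relatives of a Leonard system under the dihedral group D_4 generated by ↓, ⇓, *.) -/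

import Mathlib

/-- A parameter array of diameter `d` over a field `K`:
conditions (PA1)–(PA5) of Terwilliger's classification of Leonard systems. -/
def IsParamArray (K : Type*) [Field K] (d : ℕ) (θ θs φ ϕ : ℕ → K) : Prop :=
  -- (PA1)
  (∀ i, 1 ≤ i → i ≤ d → φ i ≠ 0 ∧ ϕ i ≠ 0) ∧
  -- (PA2)
  (∀ i j, i ≤ d → j ≤ d → i ≠ j → θ i ≠ θ j ∧ θs i ≠ θs j) ∧
  -- (PA3)
  (∀ i, 1 ≤ i → i ≤ d →
    φ i = ϕ 1 * (∑ h ∈ Finset.range i, (θ h - θ (d - h)) / (θ 0 - θ d))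
      + (θs i - θs 0) * (θ (i - 1) - θ d)) ∧
  -- (PA4)
  (∀ i, 1 ≤ i → i ≤ d →
    ϕ i = φ 1 * (∑ h ∈ Finset.range i, (θ h - θ (d - h)) / (θ 0 - θ d))
      + (θs i - θs 0) * (θ (d - i + 1) - θ 0)) ∧
  -- (PA5)
  (∀ i j, 2 ≤ i → i ≤ d - 1 → 2 ≤ j → j ≤ d - 1 →
    (θ (i - 2) - θ (i + 1)) / (θ (i - 1) - θ i)
      = (θs (i - 2) - θs (i + 1)) / (θs (i - 1) - θs i) ∧
    (θ (i - 2) - θ (i + 1)) / (θ (i - 1) - θ i)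
      = (θ (j - 2) - θ (j + 1)) / (θ (j - 1) - θ j))

namespace PArel
variable {K : Type*} [Field K]

/-- Chebyshev-like sequence: `F 0 = 0`, `F 1 = 1`, `F (n+2) = β F (n+1) - F n`. -/
def F (β : K) : ℕ → K
  | 0 => 0
  | 1 => 1
  | (n+2) => β * F β (n+1) - F β n

/-- ℤ-indexed version, odd: `Fz (-n) = -Fz n`. -/
def Fz (β : K) (n : ℤ) : K := if 0 ≤ n then F β n.toNat else -F β (-n).toNat

/-- Partial sums of `F`. -/
def G (β : K) (j : ℕ) : K := ∑ m ∈ Finset.range j, F β m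

lemma F_zero (β : K) : F β 0 = 0 := rfl
lemma F_one (β : K) : F β 1 = 1 := rfl
lemma F_rec (β : K) (n : ℕ) : F β (n+2) = β * F β (n+1) - F β n := rfl

lemma Fz_natCast (β : K) (n : ℕ) : Fz β n = F β n := by
  simp [Fz]

lemma Fz_neg (β : K) (n : ℤ) : Fz β (-n) = -Fz β n := by
  rcases lt_trichotomy n 0 with h | h | h
  · simp [Fz, h.le, not_le.2 h]
  · simp [h, Fz, F_zero]
  · simp [Fz, h.le, not_le.2 (by omega : -n < 0), not_le.2 h]

lemma Fz_rec (β : K) (n : ℤ) : Fz β (n+1) = β * Fz β n - Fz β (n-1) := by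
  rcases le_or_gt 1 n with h | h
  · obtain ⟨m, rfl⟩ : ∃ m : ℕ, n = (m : ℤ) + 1 := ⟨(n-1).toNat, by omega⟩
    have h1 : ((m:ℤ)+1+1) = ((m+2 : ℕ) : ℤ) := by push_cast; ring
    have h2 : ((m:ℤ)+1-1) = ((m : ℕ) : ℤ) := by push_cast; ring
    rw [h1, h2, Fz_natCast, Fz_natCast, show ((m:ℤ)+1) = ((m+1:ℕ):ℤ) by push_cast; ring,
      Fz_natCast, F_rec]
  · rcases eq_or_lt_of_le (by omega : n ≤ 0) with h0 | h0
    · subst h0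
      have e1 : (0 : ℤ) + 1 = ((1:ℕ):ℤ) := by norm_num
      have e2 : (0 : ℤ) - 1 = -((1:ℕ):ℤ) := by norm_num
      have e3 : (0 : ℤ) = ((0:ℕ):ℤ) := by norm_num
      rw [e1, e2, e3, Fz_neg, Fz_natCast, Fz_natCast, F_zero, F_one]
      ring
    · rcases eq_or_lt_of_le (by omega : n ≤ -1) with h1 | h1
      · subst h1
        have e1 : (-1 : ℤ) + 1 = ((0:ℕ):ℤ) := by norm_num
        have e2 : (-1 : ℤ) - 1 = -((2:ℕ):ℤ) := by norm_num
        have e3 : (-1 : ℤ) = -((1:ℕ):ℤ) := by norm_num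
        rw [e1, e2, e3, Fz_neg, Fz_neg, Fz_natCast, Fz_natCast, Fz_natCast]
        have h2 := F_rec β 0
        rw [F_zero, F_one] at h2
        rw [F_zero, F_one]
        linear_combination -h2
      · obtain ⟨m, rfl⟩ : ∃ m : ℕ, n = -((m : ℤ) + 2) := ⟨(-n-2).toNat, by omega⟩
        have e1 : -((m:ℤ)+2) + 1 = -((m+1 : ℕ) : ℤ) := by push_cast; ring
        have e2 : -((m:ℤ)+2) - 1 = -((m+3 : ℕ) : ℤ) := by push_cast; ring
        have e3 : -((m:ℤ)+2) = -((m+2 : ℕ) : ℤ) := by push_cast; ring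
        rw [e1, e2, e3, Fz_neg, Fz_neg, Fz_neg, Fz_natCast, Fz_natCast, Fz_natCast]
        have h2 := F_rec β (m+1)
        rw [show m+1+2 = m+3 by ring] at h2
        linear_combination -h2

lemma G_zero (β : K) : G β 0 = 0 := by simp [G]
lemma G_one (β : K) : G β 1 = 0 := by simp [G, F_zero]
lemma G_two (β : K) : G β 2 = 1 := by
  simp [G, Finset.sum_range_succ, F_zero, F_one]
lemma G_succ (β : K) (j : ℕ) : G β (j+1) = G β j + F β j := by
  simp [G, Finset.sum_range_succ]

/-- `β * G (j+1) = G (j+2) + G j - 1`. -/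
lemma betaG (β : K) (j : ℕ) : β * G β (j+1) = G β (j+2) + G β j - 1 := by
  induction j with
  | zero => simp [G_one, G_two, G_zero]
  | succ m ih =>
    have h1 := G_succ β (m+1)
    have h2 := G_succ β (m+2)
    have h5 := G_succ β m
    have hF := F_rec β m
    rw [show m+1+2 = m+2+1 from rfl, show m+1+1 = m+2 from rfl]
    linear_combination β * h1 + ih - hF - h2 - h5



lemma Yid (β : K) (e : ℕ) : G β (e+2) * (F β e - 1) = (G β (e+1) - 1) * F β (e+1) := by
  induction e with
  | zero => simp [G_one, G_two, F_zero, F_one]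
  | succ m ih =>
    have hg3 : G β (m+3) = G β (m+2) + F β (m+2) := G_succ β (m+2)
    have hf2 : F β (m+2) = β * F β (m+1) - F β m := F_rec β m
    have hf1 : F β (m+1) = G β (m+2) - G β (m+1) := by rw [G_succ β (m+1)]; ring
    have hf0 : F β m = G β (m+1) - G β m := by rw [G_succ β m]; ring
    have hg2 : G β (m+2) = β * G β (m+1) - G β m + 1 := by linear_combination (-1 : K) * betaG β m
    show G β (m+3) * (F β (m+1) - 1) = (G β (m+2) - 1) * F β (m+2)
    rw [hf1, hg2, hf0] at ih
    rw [hg3, hf2, hf1, hg2, hf0]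
    linear_combination ih

lemma Zid (β : K) (e : ℕ) : G β (e+3) * F β e = (G β (e+2) - 1) * (1 + F β (e+1)) := by
  induction e with
  | zero => simp [F_zero, G_two]
  | succ m ih =>
    have hg4 : G β (m+4) = G β (m+3) + F β (m+3) := G_succ β (m+3)
    have hf3 : F β (m+3) = β * F β (m+2) - F β (m+1) := F_rec β (m+1)
    have hg3 : G β (m+3) = G β (m+2) + F β (m+2) := G_succ β (m+2)
    have hf2 : F β (m+2) = β * F β (m+1) - F β m := F_rec β m
    have hf1 : F β (m+1) = G β (m+2) - G β (m+1) := by rw [G_succ β (m+1)]; ring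
    have hf0 : F β m = G β (m+1) - G β m := by rw [G_succ β m]; ring
    have hg2 : G β (m+2) = β * G β (m+1) - G β m + 1 := by linear_combination (-1 : K) * betaG β m
    show G β (m+4) * F β (m+1) = (G β (m+3) - 1) * (1 + F β (m+2))
    rw [hg3, hf2, hf1, hg2, hf0] at ih
    rw [hg4, hf3, hg3, hf2, hf1, hg2, hf0]
    linear_combination ih

lemma FIDz (β : K) (d : ℕ) :
    ∀ k, 1 ≤ k → k ≤ d →
      G β d * (Fz β ((k:ℤ)-2) + Fz β ((d:ℤ)-(k:ℤ)-1))
        = (G β (d-1) - 1) * (Fz β ((k:ℤ)-1) + Fz β ((d:ℤ)-(k:ℤ))) := by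
  intro k
  induction k using Nat.strong_induction_on with
  | _ k IH =>
    intro hk1 hkd
    match k, hk1 with
    | 1, _ =>
      rcases Nat.lt_or_ge d 2 with hd2 | hd2
      · interval_cases d
        norm_num [Fz, G_one, G_zero, F_zero, F_one]
      · -- d = e+2
        obtain ⟨e, rfl⟩ : ∃ e, d = e + 2 := ⟨d - 2, by omega⟩
        have e1 : ((1:ℕ):ℤ) - 2 = -((1:ℕ):ℤ) := by norm_num
        have e2 : ((e+2:ℕ):ℤ) - ((1:ℕ):ℤ) - 1 = ((e:ℕ):ℤ) := by push_cast; ring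
        have e3 : ((1:ℕ):ℤ) - 1 = ((0:ℕ):ℤ) := by norm_num
        have e4 : ((e+2:ℕ):ℤ) - ((1:ℕ):ℤ) = ((e+1:ℕ):ℤ) := by push_cast; ring
        rw [e1, e2, e3, e4, Fz_neg, Fz_natCast, Fz_natCast, Fz_natCast, Fz_natCast,
          F_zero, F_one, show e+2-1 = e+1 from rfl]
        linear_combination Yid β e
    | 2, _ =>
      have hd2 : 2 ≤ d := hkd
      rcases Nat.lt_or_ge d 3 with hd3 | hd3
      · interval_cases d
        norm_num [Fz, G_one, G_two, F_zero, F_one]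
      · obtain ⟨e, rfl⟩ : ∃ e, d = e + 3 := ⟨d - 3, by omega⟩
        have e1 : ((2:ℕ):ℤ) - 2 = ((0:ℕ):ℤ) := by norm_num
        have e2 : ((e+3:ℕ):ℤ) - ((2:ℕ):ℤ) - 1 = ((e:ℕ):ℤ) := by push_cast; ring
        have e3 : ((2:ℕ):ℤ) - 1 = ((1:ℕ):ℤ) := by norm_num
        have e4 : ((e+3:ℕ):ℤ) - ((2:ℕ):ℤ) = ((e+1:ℕ):ℤ) := by push_cast; ring
        rw [e1, e2, e3, e4, Fz_natCast, Fz_natCast, Fz_natCast, Fz_natCast,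
          F_zero, F_one, show e+3-1 = e+2 from rfl]
        linear_combination Zid β e
    | (m+3), _ =>
      have ih1 := IH (m+2) (by omega) (by omega) (by omega)
      have ih2 := IH (m+1) (by omega) (by omega) (by omega)
      -- normalize casts
      have c1 : ((m+3:ℕ):ℤ) = (m:ℤ)+3 := by push_cast; ring
      have c2 : ((m+2:ℕ):ℤ) = (m:ℤ)+2 := by push_cast; ring
      have c3 : ((m+1:ℕ):ℤ) = (m:ℤ)+1 := by push_cast; ring
      rw [c1] ; rw [c2] at ih1 ; rw [c3] at ih2
      rw [show ((m:ℤ)+3-2) = (m:ℤ)+1 by ring, show ((m:ℤ)+3-1) = (m:ℤ)+2 by ring,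
        show ((d:ℤ)-((m:ℤ)+3)-1) = (d:ℤ)-(m:ℤ)-4 by ring,
        show ((d:ℤ)-((m:ℤ)+3)) = (d:ℤ)-(m:ℤ)-3 by ring]
      rw [show ((m:ℤ)+2-2) = (m:ℤ) by ring, show ((m:ℤ)+2-1) = (m:ℤ)+1 by ring,
        show ((d:ℤ)-((m:ℤ)+2)-1) = (d:ℤ)-(m:ℤ)-3 by ring,
        show ((d:ℤ)-((m:ℤ)+2)) = (d:ℤ)-(m:ℤ)-2 by ring] at ih1
      rw [show ((m:ℤ)+1-2) = (m:ℤ)-1 by ring, show ((m:ℤ)+1-1) = (m:ℤ) by ring,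
        show ((d:ℤ)-((m:ℤ)+1)-1) = (d:ℤ)-(m:ℤ)-2 by ring,
        show ((d:ℤ)-((m:ℤ)+1)) = (d:ℤ)-(m:ℤ)-1 by ring] at ih2
      have hA := Fz_rec β ((m:ℤ))
      rw [show ((m:ℤ)+1) = (m:ℤ)+1 by ring] at hA
      have hB := Fz_rec β ((d:ℤ)-(m:ℤ)-3)
      rw [show ((d:ℤ)-(m:ℤ)-3+1) = (d:ℤ)-(m:ℤ)-2 by ring,
        show ((d:ℤ)-(m:ℤ)-3-1) = (d:ℤ)-(m:ℤ)-4 by ring] at hB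
      have hC := Fz_rec β ((m:ℤ)+1)
      rw [show ((m:ℤ)+1+1) = (m:ℤ)+2 by ring, show ((m:ℤ)+1-1) = (m:ℤ) by ring] at hC
      have hD := Fz_rec β ((d:ℤ)-(m:ℤ)-2)
      rw [show ((d:ℤ)-(m:ℤ)-2+1) = (d:ℤ)-(m:ℤ)-1 by ring,
        show ((d:ℤ)-(m:ℤ)-2-1) = (d:ℤ)-(m:ℤ)-3 by ring] at hD
      have hAs := Fz_rec β ((m:ℤ)-1)
      rw [show ((m:ℤ)-1+1) = (m:ℤ) by ring, show ((m:ℤ)-1-1) = (m:ℤ)-2 by ring] at hAs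
      linear_combination β * ih1 - ih2 + G β d * (hA + hB) - (G β (d-1) - 1) * (hC + hD)

lemma FSpos (β : K) (c n : ℕ) (h : c ≤ n) :
    ∑ l ∈ Finset.Ico c n, Fz β ((l:ℤ) - (c:ℤ)) = G β (n - c) := by
  rw [Finset.sum_Ico_eq_sum_range]
  refine Finset.sum_congr rfl fun i _ => ?_
  rw [show ((↑(c+i):ℤ) - (c:ℤ)) = ((i:ℕ):ℤ) by push_cast; ring, Fz_natCast]

lemma FSneg (β : K) (c : ℕ) :
    ∑ l ∈ Finset.Ico 1 c, Fz β ((l:ℤ) - (c:ℤ)) = -G β c := by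
  cases c with
  | zero => simp [G_zero]
  | succ e =>
    rw [Finset.sum_Ico_eq_sum_range]
    have : ∀ i ∈ Finset.range (e+1-1), Fz β ((↑(1+i):ℤ) - ((e+1:ℕ):ℤ)) = -F β (e - i) := by
      intro i hi
      simp only [Finset.mem_range] at hi
      rw [show ((↑(1+i):ℤ) - ((e+1:ℕ):ℤ)) = -((e-i : ℕ):ℤ) by push_cast; omega, Fz_neg,
        Fz_natCast]
    rw [Finset.sum_congr rfl this]
    rw [show e+1-1 = e from rfl]
    have h2 : ∑ i ∈ Finset.range e, F β (e - i) = ∑ i ∈ Finset.range e, F β (i+1) := by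
      have h3 := Finset.sum_range_reflect (fun i => F β (i+1)) e
      refine Eq.trans ?_ h3
      refine Finset.sum_congr rfl fun i hi => ?_
      simp only [Finset.mem_range] at hi
      congr 1
      omega
    have h4 : G β (e+1) = (∑ i ∈ Finset.range e, F β (i+1)) + F β 0 :=
      Finset.sum_range_succ' (F β) e
    rw [Finset.sum_neg_distrib, h2]
    rw [F_zero] at h4
    linear_combination h4



lemma sumFz (β : K) (d k : ℕ) (hk1 : 1 ≤ k) (hkd : k ≤ d) :
    ∑ l ∈ Finset.Icc 1 d, Fz β ((l:ℤ) - (k:ℤ)) = G β (d+1-k) - G β k := by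
  rw [show Finset.Icc 1 d = Finset.Ico 1 (d+1) by rw [Finset.Ico_add_one_right_eq_Icc]]
  rw [← Finset.sum_Ico_consecutive _ (by omega : 1 ≤ k) (by omega : k ≤ d+1)]
  rw [FSneg β k, FSpos β k (d+1) (by omega)]
  ring

section Core
variable (d : ℕ) (β : K) (a b : ℕ → K)
  (ha : ∀ k, 2 ≤ k → k + 1 ≤ d → a (k+1) = β * a k - a (k-1))
  (hb : ∀ k, 2 ≤ k → k + 1 ≤ d → b (k+1) = β * b k - b (k-1))

include ha hb in
lemma casor : ∀ k, 1 ≤ k → k + 1 ≤ d →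
    a k * b (k+1) - a (k+1) * b k = a 1 * b 2 - a 2 * b 1 := by
  intro k
  induction k with
  | zero => omega
  | succ m ih =>
    intro _ h2
    rcases Nat.eq_or_lt_of_le (by omega : 1 ≤ m + 1) with h1 | h1
    · rw [← h1]
    · have hm : 1 ≤ m := by omega
      have hrA := ha (m+1) (by omega) (by omega)
      have hrB := hb (m+1) (by omega) (by omega)
      rw [show m+1-1 = m from rfl] at hrA hrB
      rw [← ih hm (by omega), hrA, hrB]
      ring

include ha hb in
lemma c_eq : ∀ k l, 1 ≤ k → k ≤ d → 1 ≤ l → l ≤ d →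
    a k * b l - a l * b k = (a 1 * b 2 - a 2 * b 1) * Fz β ((l:ℤ) - (k:ℤ)) := by
  -- first the case k ≤ l via an auxiliary statement on gaps
  have aux : ∀ m : ℕ, ∀ k, 1 ≤ k → k + m ≤ d →
      a k * b (k+m) - a (k+m) * b k = (a 1 * b 2 - a 2 * b 1) * F β m := by
    intro m
    induction m using Nat.strong_induction_on with
    | _ m IH =>
      intro k hk1 hkm
      match m with
      | 0 => rw [F_zero]; ring
      | 1 => rw [F_one, mul_one]; exact casor d β a b ha hb k hk1 hkm
      | (n+2) =>
        have h1 := IH (n+1) (by omega) k hk1 (by omega)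
        have h0 := IH n (by omega) k hk1 (by omega)
        have hrA := ha (k+n+1) (by omega) (by omega)
        have hrB := hb (k+n+1) (by omega) (by omega)
        rw [show k+n+1-1 = k+n from rfl] at hrA hrB
        rw [show k+(n+2) = k+n+1+1 by ring, hrA, hrB, F_rec,
          show k+n+1 = k+(n+1) by ring]
        linear_combination β * h1 - h0
  intro k l hk1 hkd hl1 hld
  rcases le_total k l with h | h
  · obtain ⟨m, rfl⟩ : ∃ m, l = k + m := ⟨l - k, by omega⟩
    rw [show ((↑(k+m):ℤ) - (k:ℤ)) = ((m:ℕ):ℤ) by push_cast; ring, Fz_natCast]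
    exact aux m k hk1 (by omega)
  · obtain ⟨m, rfl⟩ : ∃ m, k = l + m := ⟨k - l, by omega⟩
    rw [show ((l:ℤ) - (↑(l+m):ℤ)) = -((m:ℕ):ℤ) by push_cast; ring, Fz_neg, Fz_natCast]
    have := aux m l hl1 (by omega)
    linear_combination -this

include ha hb in
lemma cross : ∀ k, 1 ≤ k → k ≤ d →
    a k * (∑ l ∈ Finset.Icc 1 d, b l) - b k * (∑ l ∈ Finset.Icc 1 d, a l)
      = (a 1 * b 2 - a 2 * b 1) * (G β (d+1-k) - G β k) := by
  intro k hk1 hkd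
  have h1 : a k * (∑ l ∈ Finset.Icc 1 d, b l) - b k * (∑ l ∈ Finset.Icc 1 d, a l)
      = ∑ l ∈ Finset.Icc 1 d, (a k * b l - a l * b k) := by
    rw [Finset.sum_sub_distrib, Finset.mul_sum, Finset.mul_sum]
    congr 1
    refine Finset.sum_congr rfl fun l _ => by ring
  rw [h1]
  have h2 : ∀ l ∈ Finset.Icc 1 d, a k * b l - a l * b k
      = (a 1 * b 2 - a 2 * b 1) * Fz β ((l:ℤ) - (k:ℤ)) := by
    intro l hl
    simp only [Finset.mem_Icc] at hl
    exact c_eq d β a b ha hb k l hk1 hkd hl.1 hl.2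
  rw [Finset.sum_congr rfl h2, ← Finset.mul_sum, sumFz β d k hk1 hkd]

include ha hb in
lemma spade : ∀ k, 1 ≤ k → k ≤ d →
    (a k + a (d+1-k)) * (∑ l ∈ Finset.Icc 1 d, b l)
      = (b k + b (d+1-k)) * (∑ l ∈ Finset.Icc 1 d, a l) := by
  intro k hk1 hkd
  have c1 := cross d β a b ha hb k hk1 hkd
  have c2 := cross d β a b ha hb (d+1-k) (by omega) (by omega)
  rw [show d+1-(d+1-k) = k by omega] at c2
  linear_combination c1 + c2

include ha in
lemma sol : ∀ k, 1 ≤ k → k ≤ d →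
    a k = a 2 * Fz β ((k:ℤ)-1) - a 1 * Fz β ((k:ℤ)-2) := by
  intro k
  induction k using Nat.strong_induction_on with
  | _ k IH =>
    intro hk1 hkd
    match k with
    | 1 =>
      norm_num [Fz, F_zero, F_one]
    | 2 =>
      norm_num [Fz, F_zero, F_one]
    | (n+3) =>
      have h1 := IH (n+2) (by omega) (by omega) (by omega)
      have h0 := IH (n+1) (by omega) (by omega) (by omega)
      have hrA := ha (n+2) (by omega) (by omega)
      rw [show n+2-1 = n+1 from rfl] at hrA
      have e1 := Fz_rec β ((n:ℤ)+1)
      have e2 := Fz_rec β ((n:ℤ))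
      rw [show ((n:ℤ)+1+1) = ((n:ℤ)+2) by ring, show ((n:ℤ)+1-1) = (n:ℤ) by ring] at e1
      rw [show ((n:ℤ)+1) = ((n:ℤ)+1) by ring, show ((n:ℤ)-1) = ((n:ℤ)-1) by ring] at e2
      rw [show ((↑(n+3):ℤ)-1) = (n:ℤ)+2 by push_cast; ring,
        show ((↑(n+3):ℤ)-2) = (n:ℤ)+1 by push_cast; ring,
        show n+3 = (n+2)+1 by ring, hrA]
      rw [show ((↑(n+2):ℤ)-1) = (n:ℤ)+1 by push_cast; ring,
        show ((↑(n+2):ℤ)-2) = (n:ℤ) by push_cast; ring] at h1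
      rw [show ((↑(n+1):ℤ)-1) = (n:ℤ) by push_cast; ring,
        show ((↑(n+1):ℤ)-2) = (n:ℤ)-1 by push_cast; ring] at h0
      rw [h1, h0, e1, e2]
      ring

include ha in
lemma sumA (hd : 1 ≤ d) :
    (∑ l ∈ Finset.Icc 1 d, a l) = a 2 * G β d - a 1 * (G β (d-1) - 1) := by
  have h1 : ∀ l ∈ Finset.Icc 1 d, a l = a 2 * Fz β ((l:ℤ)-1) - a 1 * Fz β ((l:ℤ)-2) := by
    intro l hl
    simp only [Finset.mem_Icc] at hl
    exact sol d β a ha l hl.1 hl.2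
  rw [Finset.sum_congr rfl h1, Finset.sum_sub_distrib, ← Finset.mul_sum, ← Finset.mul_sum]
  have h2 : ∑ l ∈ Finset.Icc 1 d, Fz β ((l:ℤ)-1) = G β d := by
    have h := sumFz β d 1 le_rfl hd
    rw [show d+1-1 = d from by omega, G_one] at h
    push_cast at h
    rw [h]; ring
  rcases Nat.eq_or_lt_of_le hd with h | h
  · rw [← h]
    have hz : Fz β (-1) = -1 := by
      rw [show (-1 : ℤ) = -((1:ℕ):ℤ) by norm_num, Fz_neg, Fz_natCast, F_one]
    have hz0 : Fz β 0 = 0 := by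
      rw [show (0 : ℤ) = ((0:ℕ):ℤ) by norm_num, Fz_natCast, F_zero]
    norm_num [G_one, G_zero, hz, hz0]
  · have h3 : ∑ l ∈ Finset.Icc 1 d, Fz β ((l:ℤ)-2) = G β (d-1) - 1 := by
      have h := sumFz β d 2 (by omega) (by omega)
      rw [show d+1-2 = d-1 from by omega, G_two] at h
      push_cast at h
      rw [h]
    rw [h2, h3]

include ha in
lemma ssl' (hd : 1 ≤ d) : ∀ k, 1 ≤ k → k ≤ d →
    G β d * (a k + a (d+1-k))
      = (∑ l ∈ Finset.Icc 1 d, a l) * (Fz β ((k:ℤ)-1) + Fz β ((d:ℤ)-(k:ℤ))) := by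
  intro k hk1 hkd
  have s1 := sol d β a ha k hk1 hkd
  have s2 := sol d β a ha (d+1-k) (by omega) (by omega)
  have hc : ((↑(d+1-k):ℤ)) = (d:ℤ)-(k:ℤ)+1 := by omega
  rw [hc, show ((d:ℤ)-(k:ℤ)+1-1) = (d:ℤ)-(k:ℤ) by ring,
    show ((d:ℤ)-(k:ℤ)+1-2) = (d:ℤ)-(k:ℤ)-1 by ring] at s2
  have fid := FIDz β d k hk1 hkd
  have hs := sumA d β a ha hd
  rw [s1, s2, hs]
  linear_combination - a 1 * fid
end Core



lemma tele (θ : ℕ → K) : ∀ j, ∑ k ∈ Finset.Icc 1 j, (θ (k-1) - θ k) = θ 0 - θ j := by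
  intro j
  induction j with
  | zero => simp
  | succ m ih =>
    rw [Finset.sum_Icc_succ_top (by omega : 1 ≤ m+1), ih]
    rw [Nat.add_sub_cancel]
    ring

lemma s_sym (d : ℕ) (θ : ℕ → K) : ∀ i, 1 ≤ i → i ≤ d →
    ∑ h ∈ Finset.range i, (θ h - θ (d-h))
      = ∑ h ∈ Finset.range (d-i+1), (θ h - θ (d-h)) := by
  have key : ∀ i, 1 ≤ i → i ≤ d → i ≤ d-i+1 →
      ∑ h ∈ Finset.range i, (θ h - θ (d-h))
        = ∑ h ∈ Finset.range (d-i+1), (θ h - θ (d-h)) := by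
    intro i h1 h2 h3
    rw [Finset.range_eq_Ico, Finset.range_eq_Ico,
      ← Finset.sum_Ico_consecutive _ (by omega : 0 ≤ i) (by omega : i ≤ d-i+1)]
    have hzero : ∑ h ∈ Finset.Ico i (d-i+1), (θ h - θ (d-h)) = 0 := by
      apply Finset.sum_involution (g := fun h _ => d - h)
      · intro x hx
        simp only [Finset.mem_Ico] at hx
        rw [show d - (d-x) = x by omega]
        ring
      · intro x hx hfx
        simp only [Finset.mem_Ico] at hx
        intro hcon
        apply hfx
        rw [hcon, sub_self]
      · intro x hx
        simp only [Finset.mem_Ico] at hx ⊢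
        omega
      · intro x hx
        simp only [Finset.mem_Ico] at hx
        omega
    rw [hzero, add_zero]
  intro i h1 h2
  rcases le_or_gt i (d-i+1) with h3 | h3
  · exact key i h1 h2 h3
  · have := key (d-i+1) (by omega) (by omega) (by omega)
    rw [this, show d-(d-i+1)+1 = i by omega]

lemma theta_core (d : ℕ) (hd : 1 ≤ d) (θ θs : ℕ → K)
    (hne : ∀ i j, i ≤ d → j ≤ d → i ≠ j → θ i ≠ θ j ∧ θs i ≠ θs j)
    (hPA5 : ∀ i j, 2 ≤ i → i ≤ d - 1 → 2 ≤ j → j ≤ d - 1 →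
      (θ (i - 2) - θ (i + 1)) / (θ (i - 1) - θ i)
        = (θs (i - 2) - θs (i + 1)) / (θs (i - 1) - θs i) ∧
      (θ (i - 2) - θ (i + 1)) / (θ (i - 1) - θ i)
        = (θ (j - 2) - θ (j + 1)) / (θ (j - 1) - θ j)) :
    (∀ i, i ≤ d → (∑ h ∈ Finset.range i, (θ h - θ (d - h))) * (θs 0 - θs d)
        = (∑ h ∈ Finset.range i, (θs h - θs (d - h))) * (θ 0 - θ d)) ∧
    (∀ i, 1 ≤ i → i ≤ d →
      ((θ 0 - θ 1) * (θs 0 - θs d) - (θs 0 - θs 1) * (θ 0 - θ d))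
          * (∑ h ∈ Finset.range i, (θ h - θ (d - h)))
        = (θ 0 - θ d) * ((θs i - θs 0) * (θ (i-1) - θ d)
            - (θ i - θ 0) * (θs (i-1) - θs d))) := by
  set β : K := (θ 0 - θ 3) / (θ 1 - θ 2) - 1 with hβ
  set a : ℕ → K := fun k => θ (k-1) - θ k with ha_def
  set b : ℕ → K := fun k => θs (k-1) - θs k with hb_def
  have haval : ∀ k, a k = θ (k-1) - θ k := fun k => rfl
  have hbval : ∀ k, b k = θs (k-1) - θs k := fun k => rfl
  have recθ : ∀ k, 2 ≤ k → k + 1 ≤ d → a (k+1) = β * a k - a (k-1) := by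
    intro k hk2 hk1
    obtain ⟨_, hq2⟩ := hPA5 k 2 hk2 (by omega) (by omega) (by omega)
    norm_num at hq2
    have hden : θ (k-1) - θ k ≠ 0 :=
      sub_ne_zero.2 (hne (k-1) k (by omega) (by omega) (by omega)).1
    have hE : θ (k-2) - θ (k+1) = ((θ 0 - θ 3) / (θ 1 - θ 2)) * (θ (k-1) - θ k) :=
      (div_eq_iff hden).1 hq2
    rw [haval, haval, haval, hβ]
    rw [show k+1-1 = k from rfl, show k-1-1 = k-2 from rfl]
    linear_combination hE
  have recθs : ∀ k, 2 ≤ k → k + 1 ≤ d → b (k+1) = β * b k - b (k-1) := by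
    intro k hk2 hk1
    obtain ⟨hq1, hq2⟩ := hPA5 k 2 hk2 (by omega) (by omega) (by omega)
    norm_num at hq2
    have hden : θs (k-1) - θs k ≠ 0 :=
      sub_ne_zero.2 (hne (k-1) k (by omega) (by omega) (by omega)).2
    have hE : θs (k-2) - θs (k+1) = ((θ 0 - θ 3) / (θ 1 - θ 2)) * (θs (k-1) - θs k) :=
      (div_eq_iff hden).1 (hq1.symm.trans hq2)
    rw [hbval, hbval, hbval, hβ]
    rw [show k+1-1 = k from rfl, show k-1-1 = k-2 from rfl]
    linear_combination hE
  have hAsum : ∑ l ∈ Finset.Icc 1 d, a l = θ 0 - θ d := tele θ d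
  have hBsum : ∑ l ∈ Finset.Icc 1 d, b l = θs 0 - θs d := tele θs d
  -- the pointwise symmetric identity
  have gaux : ∀ h, 2*h ≤ d →
      (θ h - θ (d-h)) * (θs 0 - θs d) = (θs h - θs (d-h)) * (θ 0 - θ d) := by
    intro h
    induction h with
    | zero => intro _; rw [Nat.sub_zero]; ring
    | succ m ih =>
      intro hm
      have ihm := ih (by omega)
      have sp := spade d β a b recθ recθs (m+1) (by omega) (by omega)
      rw [show d+1-(m+1) = d-m by omega, hAsum, hBsum] at sp
      rw [haval, haval, hbval, hbval] at sp
      rw [show m+1-1 = m from rfl, show d-m-1 = d-(m+1) from rfl] at sp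
      linear_combination ihm - sp
  have glem : ∀ h, h ≤ d →
      (θ h - θ (d-h)) * (θs 0 - θs d) = (θs h - θs (d-h)) * (θ 0 - θ d) := by
    intro h hh
    rcases le_or_gt (2*h) d with h2 | h2
    · exact gaux h h2
    · have := gaux (d-h) (by omega)
      rw [show d-(d-h) = h by omega] at this
      linear_combination -this
  have C1 : ∀ i, i ≤ d → (∑ h ∈ Finset.range i, (θ h - θ (d - h))) * (θs 0 - θs d)
      = (∑ h ∈ Finset.range i, (θs h - θs (d - h))) * (θ 0 - θ d) := by
    intro i hi
    rw [Finset.sum_mul, Finset.sum_mul]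
    refine Finset.sum_congr rfl fun h hh => ?_
    simp only [Finset.mem_range] at hh
    exact glem h (by omega)
  refine ⟨C1, ?_⟩
  -- now the M identity
  have kap : (θ 0 - θ 1) * (θs 0 - θs d) - (θs 0 - θs 1) * (θ 0 - θ d)
      = (a 1 * b 2 - a 2 * b 1) * G β d := by
    have cr := cross d β a b recθ recθs 1 le_rfl hd
    rw [hAsum, hBsum, show d+1-1 = d from rfl, G_one] at cr
    rw [haval 1, hbval 1] at cr
    norm_num at cr
    linear_combination cr
  have ssl2 : ∀ i, i ≤ d → G β d * (θ i - θ (d-i))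
      = (θ 0 - θ d) * (G β (d-i) - G β i) := by
    have aux : ∀ i, 2*i ≤ d → G β d * (θ i - θ (d-i))
        = (θ 0 - θ d) * (G β (d-i) - G β i) := by
      intro i
      induction i with
      | zero => intro _; rw [Nat.sub_zero, G_zero]; ring
      | succ m ih =>
        intro hm
        have ihm := ih (by omega)
        have sp := ssl' d β a recθ hd (m+1) (by omega) (by omega)
        rw [show d+1-(m+1) = d-m by omega, hAsum] at sp
        rw [haval, haval] at sp
        rw [show m+1-1 = m from rfl, show d-m-1 = d-(m+1) from rfl] at sp
        rw [show ((↑(m+1):ℤ)-1) = ((m:ℕ):ℤ) by push_cast; ring, Fz_natCast] at sp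
        rw [show ((d:ℤ)-(↑(m+1):ℤ)) = ((d-(m+1) : ℕ):ℤ) by omega, Fz_natCast] at sp
        have gs1 : G β (d-m) = G β (d-(m+1)) + F β (d-(m+1)) := by
          rw [show d-m = (d-(m+1))+1 by omega, G_succ]
        have gs2 : G β (m+1) = G β m + F β m := G_succ β m
        linear_combination ihm - sp + (θ 0 - θ d) * gs1 + (θ 0 - θ d) * gs2
    intro i hi
    rcases le_or_gt (2*i) d with h2 | h2
    · exact aux i h2
    · have := aux (d-i) (by omega)
      rw [show d-(d-i) = i by omega] at this
      linear_combination -this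
  intro i h1
  induction i, h1 using Nat.le_induction with
  | base =>
    intro _
    rw [Finset.sum_range_one, Nat.sub_zero]
    rw [show (1:ℕ)-1 = 0 from rfl]
    ring
  | succ i hi1 ih =>
    intro hid
    have ihm := ih (by omega)
    rw [Finset.sum_range_succ]
    -- the R-increment
    have t1sum : ∑ l ∈ Finset.Icc (i+1) d, b l = θs i - θs d := by
      have split := Finset.sum_Ico_consecutive (fun l => b l)
        (by omega : 1 ≤ i+1) (by omega : i+1 ≤ d+1)
      rw [Finset.Ico_add_one_right_eq_Icc, Finset.Ico_add_one_right_eq_Icc, Finset.Ico_add_one_right_eq_Icc] at split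
      rw [tele θs, tele θs] at split
      linear_combination split
    have t1sum' : ∑ l ∈ Finset.Icc (i+1) d, a l = θ i - θ d := by
      have split := Finset.sum_Ico_consecutive (fun l => a l)
        (by omega : 1 ≤ i+1) (by omega : i+1 ≤ d+1)
      rw [Finset.Ico_add_one_right_eq_Icc, Finset.Ico_add_one_right_eq_Icc, Finset.Ico_add_one_right_eq_Icc] at split
      rw [tele θ, tele θ] at split
      linear_combination split
    have t2sum : ∑ l ∈ Finset.Ico 1 i, b l = θs 0 - θs (i-1) := by
      have : Finset.Ico 1 i = Finset.Icc 1 (i-1) := by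
        ext x; simp only [Finset.mem_Ico, Finset.mem_Icc]; omega
      rw [this, tele θs]
    have t2sum' : ∑ l ∈ Finset.Ico 1 i, a l = θ 0 - θ (i-1) := by
      have : Finset.Ico 1 i = Finset.Icc 1 (i-1) := by
        ext x; simp only [Finset.mem_Ico, Finset.mem_Icc]; omega
      rw [this, tele θ]
    -- term1
    have term1 : a (i+1) * (θs i - θs d) - (θ i - θ d) * b (i+1)
        = (a 1 * b 2 - a 2 * b 1) * G β (d-i) := by
      rw [← t1sum, ← t1sum', Finset.mul_sum, Finset.sum_mul, ← Finset.sum_sub_distrib]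
      have hc : ∀ l ∈ Finset.Icc (i+1) d, a (i+1) * b l - a l * b (i+1)
          = (a 1 * b 2 - a 2 * b 1) * Fz β ((l:ℤ) - ((i+1:ℕ):ℤ)) := by
        intro l hl
        simp only [Finset.mem_Icc] at hl
        exact c_eq d β a b recθ recθs (i+1) l (by omega) (by omega) (by omega) (by omega)
      rw [Finset.sum_congr rfl hc, ← Finset.mul_sum]
      congr 1
      rw [show Finset.Icc (i+1) d = Finset.Ico (i+1) (d+1) by rw [Finset.Ico_add_one_right_eq_Icc]]
      rw [FSpos β (i+1) (d+1) (by omega)]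
      rw [show d+1-(i+1) = d-i by omega]
    have term2 : a i * (θs 0 - θs (i-1)) - (θ 0 - θ (i-1)) * b i
        = (a 1 * b 2 - a 2 * b 1) * (-G β i) := by
      rw [← t2sum, ← t2sum', Finset.mul_sum, Finset.sum_mul, ← Finset.sum_sub_distrib]
      have hc : ∀ l ∈ Finset.Ico 1 i, a i * b l - a l * b i
          = (a 1 * b 2 - a 2 * b 1) * Fz β ((l:ℤ) - ((i:ℕ):ℤ)) := by
        intro l hl
        simp only [Finset.mem_Ico] at hl
        exact c_eq d β a b recθ recθs i l (by omega) (by omega) (by omega) (by omega)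
      rw [Finset.sum_congr rfl hc, ← Finset.mul_sum, FSneg β i]
    -- finish the step
    have hss := ssl2 i (by omega)
    have hw : a 1 * b 2 - a 2 * b 1
        = (θ 0 - θ 1) * (θs 1 - θs 2) - (θ 1 - θ 2) * (θs 0 - θs 1) := by
      rw [haval 1, haval 2, hbval 1, hbval 2]
    rw [haval (i+1), hbval (i+1), hw, Nat.add_sub_cancel] at term1
    rw [haval i, hbval i, hw] at term2
    rw [hw] at kap
    rw [Nat.add_sub_cancel]
    linear_combination ihm - (θ 0 - θ d) * term1 - (θ 0 - θ d) * term2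
      + ((θ 0 - θ 1) * (θs 1 - θs 2) - (θ 1 - θ 2) * (θs 0 - θs 1)) * hss
      + (θ i - θ (d-i)) * kap



lemma congr_lemma (d : ℕ) (hd : 1 ≤ d) (θ₁ θs₁ φ₁ ϕ₁ θ₂ θs₂ φ₂ ϕ₂ : ℕ → K)
    (hθ : ∀ i, i ≤ d → θ₂ i = θ₁ i) (hθs : ∀ i, i ≤ d → θs₂ i = θs₁ i)
    (hφ : ∀ i, 1 ≤ i → i ≤ d → φ₂ i = φ₁ i) (hϕ : ∀ i, 1 ≤ i → i ≤ d → ϕ₂ i = ϕ₁ i)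
    (h : IsParamArray K d θ₁ θs₁ φ₁ ϕ₁) : IsParamArray K d θ₂ θs₂ φ₂ ϕ₂ := by
  obtain ⟨h1, h2, h3, h4, h5⟩ := h
  have hsum : ∀ i, i ≤ d →
      (∑ h ∈ Finset.range i, (θ₂ h - θ₂ (d - h)) / (θ₂ 0 - θ₂ d))
        = ∑ h ∈ Finset.range i, (θ₁ h - θ₁ (d - h)) / (θ₁ 0 - θ₁ d) := by
    intro i hi
    refine Finset.sum_congr rfl fun h hh => ?_
    simp only [Finset.mem_range] at hh
    rw [hθ h (by omega), hθ (d-h) (by omega), hθ 0 (by omega), hθ d le_rfl]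
  refine ⟨?_, ?_, ?_, ?_, ?_⟩
  · intro i hi1 hid
    rw [hφ i hi1 hid, hϕ i hi1 hid]
    exact h1 i hi1 hid
  · intro i j hi hj hij
    rw [hθ i hi, hθ j hj, hθs i hi, hθs j hj]
    exact h2 i j hi hj hij
  · intro i hi1 hid
    rw [hφ i hi1 hid, hϕ 1 le_rfl hd, hsum i hid, hθs i hid, hθs 0 (by omega),
      hθ (i-1) (by omega), hθ d le_rfl]
    exact h3 i hi1 hid
  · intro i hi1 hid
    rw [hϕ i hi1 hid, hφ 1 le_rfl hd, hsum i hid, hθs i hid, hθs 0 (by omega),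
      hθ (d-i+1) (by omega), hθ 0 (by omega)]
    exact h4 i hi1 hid
  · intro i j hi2 hi1 hj2 hj1
    rw [hθ (i-2) (by omega), hθ (i+1) (by omega), hθ (i-1) (by omega), hθ i (by omega),
      hθs (i-2) (by omega), hθs (i+1) (by omega), hθs (i-1) (by omega), hθs i (by omega),
      hθ (j-2) (by omega), hθ (j+1) (by omega), hθ (j-1) (by omega), hθ j (by omega)]
    exact h5 i j hi2 hi1 hj2 hj1

lemma LDown (d : ℕ) (hd : 1 ≤ d) (θ θs φ ϕ : ℕ → K)
    (h : IsParamArray K d θ θs φ ϕ) :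
    IsParamArray K d (fun i => θ (d - i)) θs ϕ φ := by
  obtain ⟨h1, h2, h3, h4, h5⟩ := h
  have hsum : ∀ i, i ≤ d →
      (∑ h ∈ Finset.range i, (θ (d - h) - θ (d - (d - h))) / (θ (d - 0) - θ (d - d)))
        = ∑ h ∈ Finset.range i, (θ h - θ (d - h)) / (θ 0 - θ d) := by
    intro i hi
    refine Finset.sum_congr rfl fun h hh => ?_
    simp only [Finset.mem_range] at hh
    rw [show d - (d - h) = h by omega, Nat.sub_zero, Nat.sub_self]
    rw [show θ (d - h) - θ h = -(θ h - θ (d - h)) by ring,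
      show θ d - θ 0 = -(θ 0 - θ d) by ring, neg_div_neg_eq]
  refine ⟨?_, ?_, ?_, ?_, ?_⟩
  · intro i hi1 hid
    exact ⟨(h1 i hi1 hid).2, (h1 i hi1 hid).1⟩
  · intro i j hi hj hij
    beta_reduce
    exact ⟨(h2 (d-i) (d-j) (by omega) (by omega) (by omega)).1, (h2 i j hi hj hij).2⟩
  · intro i hi1 hid
    beta_reduce
    rw [hsum i hid, show d - (i-1) = d-i+1 by omega, Nat.sub_self]
    exact h4 i hi1 hid
  · intro i hi1 hid
    beta_reduce
    rw [hsum i hid, show d - (d-i+1) = i-1 by omega, Nat.sub_zero]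
    exact h3 i hi1 hid
  · intro i j hi2 hi1 hj2 hj1
    beta_reduce
    have key : ∀ k, 2 ≤ k → k ≤ d - 1 →
        (θ (d - (k-2)) - θ (d - (k+1))) / (θ (d - (k-1)) - θ (d - k))
          = (θ ((d+1-k) - 2) - θ ((d+1-k) + 1)) / (θ ((d+1-k) - 1) - θ (d+1-k)) := by
      intro k hk2 hk1
      rw [show d - (k-2) = (d+1-k)+1 by omega, show d - (k+1) = (d+1-k)-2 by omega,
        show d - (k-1) = d+1-k by omega, show d - k = (d+1-k)-1 by omega]
      rw [show θ ((d+1-k)+1) - θ ((d+1-k)-2) = -(θ ((d+1-k)-2) - θ ((d+1-k)+1)) by ring,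
        show θ (d+1-k) - θ ((d+1-k)-1) = -(θ ((d+1-k)-1) - θ (d+1-k)) by ring,
        neg_div_neg_eq]
    have hki : 2 ≤ d+1-i ∧ d+1-i ≤ d - 1 := by omega
    have hkj : 2 ≤ d+1-j ∧ d+1-j ≤ d - 1 := by omega
    rw [key i hi2 hi1, key j hj2 hj1]
    obtain ⟨p1, p2⟩ := h5 (d+1-i) i hki.1 hki.2 hi2 hi1
    obtain ⟨q1, q2⟩ := h5 (d+1-j) (d+1-i) hkj.1 hkj.2 hki.1 hki.2
    obtain ⟨r1, _⟩ := h5 i i hi2 hi1 hi2 hi1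
    constructor
    · rw [p2, r1]
    · rw [q2]

lemma Lstar (d : ℕ) (hd : 1 ≤ d) (θ θs φ ϕ : ℕ → K)
    (h : IsParamArray K d θ θs φ ϕ) :
    IsParamArray K d θs θ φ (fun i => ϕ (d - i + 1)) := by
  obtain ⟨h1, h2, h3, h4, h5⟩ := h
  obtain ⟨C1, M⟩ := theta_core d hd θ θs h2 h5
  have hΔ : θ 0 - θ d ≠ 0 := sub_ne_zero.2 (h2 0 d (by omega) le_rfl (by omega)).1
  have hΔs : θs 0 - θs d ≠ 0 := sub_ne_zero.2 (h2 0 d (by omega) le_rfl (by omega)).2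
  have SQ : ∀ i, i ≤ d →
      (∑ h ∈ Finset.range i, (θs h - θs (d - h)) / (θs 0 - θs d))
        = (∑ h ∈ Finset.range i, (θ h - θ (d - h))) / (θ 0 - θ d) := by
    intro i hi
    rw [← Finset.sum_div, div_eq_div_iff hΔs hΔ]
    linear_combination -(C1 i hi)
  have hSd : (∑ h ∈ Finset.range d, (θ h - θ (d - h)) / (θ 0 - θ d)) = 1 := by
    have hsym := s_sym d θ 1 le_rfl hd
    rw [show d-1+1 = d by omega] at hsym
    rw [← Finset.sum_div, ← hsym, Finset.sum_range_one, Nat.sub_zero, div_self hΔ]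
  have hS1 : (∑ h ∈ Finset.range 1, (θ h - θ (d - h)) / (θ 0 - θ d)) = 1 := by
    rw [← Finset.sum_div, Finset.sum_range_one, Nat.sub_zero, div_self hΔ]
  have h4d := h4 d hd le_rfl
  have h41 := h4 1 le_rfl hd
  rw [hSd, Nat.sub_self] at h4d
  rw [hS1] at h41
  have expand : ϕ d = ϕ 1 + ((θ 0 - θ 1) * (θs 0 - θs d) - (θs 0 - θs 1) * (θ 0 - θ d)) := by
    rw [show d-1+1 = d by omega] at h41
    linear_combination h4d - h41
  refine ⟨?_, ?_, ?_, ?_, ?_⟩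
  · intro i hi1 hid
    beta_reduce
    exact ⟨(h1 i hi1 hid).1, (h1 (d-i+1) (by omega) (by omega)).2⟩
  · intro i j hi hj hij
    exact ⟨(h2 i j hi hj hij).2, (h2 i j hi hj hij).1⟩
  · intro i hi1 hid
    beta_reduce
    rw [show d-1+1 = d by omega, SQ i hid]
    have h3i := h3 i hi1 hid
    have key : ((θ 0 - θ 1) * (θs 0 - θs d) - (θs 0 - θs 1) * (θ 0 - θ d))
        * ((∑ h ∈ Finset.range i, (θ h - θ (d - h))) / (θ 0 - θ d))
        = (θs i - θs 0) * (θ (i-1) - θ d) - (θ i - θ 0) * (θs (i-1) - θs d) := by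
      rw [← mul_div_assoc, M i hi1 hid, mul_div_cancel_left₀ _ hΔ]
    rw [← Finset.sum_div] at h3i
    rw [h3i]
    linear_combination
      -((∑ h ∈ Finset.range i, (θ h - θ (d - h))) / (θ 0 - θ d)) * expand - key
  · intro i hi1 hid
    beta_reduce
    rw [SQ i hid]
    have h4j := h4 (d-i+1) (by omega) (by omega)
    rw [show d-(d-i+1)+1 = i by omega] at h4j
    have hsym := s_sym d θ i hi1 hid
    rw [← Finset.sum_div, ← hsym] at h4j
    linear_combination h4j
  · intro i j hi2 hi1 hj2 hj1
    obtain ⟨p1, p2⟩ := h5 i j hi2 hi1 hj2 hj1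
    obtain ⟨q1, _⟩ := h5 j j hj2 hj1 hj2 hj1
    exact ⟨p1.symm, by rw [← p1, p2, q1]⟩

end PArel


/-- The seven nontrivial relatives of a parameter array under the `D₄` action
are again parameter arrays of the same diameter. -/
theorem relatives_isParamArray {K : Type*} [Field K] (d : ℕ) (hd : 1 ≤ d)
    (θ θs φ ϕ : ℕ → K) (hPA : IsParamArray K d θ θs φ ϕ) :
    -- P^↓
    IsParamArray K d θ (fun i => θs (d - i))
      (fun i => ϕ (d - i + 1)) (fun i => φ (d - i + 1)) ∧
    -- P^⇓
    IsParamArray K d (fun i => θ (d - i)) θs ϕ φ ∧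
    -- P^↓⇓
    IsParamArray K d (fun i => θ (d - i)) (fun i => θs (d - i))
      (fun i => φ (d - i + 1)) (fun i => ϕ (d - i + 1)) ∧
    -- P^*
    IsParamArray K d θs θ φ (fun i => ϕ (d - i + 1)) ∧
    -- P^↓*
    IsParamArray K d (fun i => θs (d - i)) θ
      (fun i => ϕ (d - i + 1)) φ ∧
    -- P^⇓*
    IsParamArray K d θs (fun i => θ (d - i)) ϕ (fun i => φ (d - i + 1)) ∧
    -- P^↓⇓*
    IsParamArray K d (fun i => θs (d - i)) (fun i => θ (d - i))
      (fun i => φ (d - i + 1)) ϕ := by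
  have hstar := PArel.Lstar d hd θ θs φ ϕ hPA
  have hDown := PArel.LDown d hd θ θs φ ϕ hPA
  have h6 := PArel.Lstar d hd _ _ _ _ hDown
  have h5' := PArel.LDown d hd _ _ _ _ hstar
  have h1' := PArel.Lstar d hd _ _ _ _ h5'
  have h3' := PArel.LDown d hd _ _ _ _ h1'
  have h7pre := PArel.Lstar d hd _ _ _ _ h3'
  have h7 : IsParamArray K d (fun i => θs (d - i)) (fun i => θ (d - i))
      (fun i => φ (d - i + 1)) ϕ := by
    refine PArel.congr_lemma d hd _ _ _ _ _ _ _ _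
      (fun i _ => rfl) (fun i _ => rfl) (fun i _ _ => rfl) ?_ h7pre
    intro i hi1 hid
    show ϕ i = ϕ (d - (d - i + 1) + 1)
    congr 1
    omega
  exact ⟨h1', hDown, h3', hstar, h5', h6, h7⟩
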